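/- arXiv:2102.05802 — 2 statements merged into one kernel-verified Lean document; each statement's English description precedes it below -/
import Mathlib

section
/- If X is a mean-zero sub-Gaussian random variable with parameter N, i.e., E[exp(λX)] ≤ exp(λ²N²/2) for all real λ, then for every λ ∈ [0,1), E[exp(λX²/(2N²))] ≤ 1/√(1-λ). -/
set_option maxHeartbeats 1000000

open MeasureTheory Real

/-- Completing the square: `exp(s*x) * pdf(0,v)(s) = exp(v*x²/2) * pdf(v*x,v)(s)`. -/
lemma gauss_complete_square (v : NNReal) (hv : 0 < (v : ℝ)) (x s : ℝ) :
    Real.exp (s * x) * ProbabilityTheory.gaussianPDFReal 0 v s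
      = Real.exp ((v : ℝ) * x ^ 2 / 2)
        * ProbabilityTheory.gaussianPDFReal ((v : ℝ) * x) v s := by
  simp only [ProbabilityTheory.gaussianPDFReal, sub_zero]
  rw [show rexp (s * x) * ((√(2 * π * v))⁻¹ * rexp (-s ^ 2 / (2 * v)))
      = (√(2 * π * v))⁻¹ * rexp (s * x + -s ^ 2 / (2 * v)) by rw [Real.exp_add]; ring]
  rw [show rexp ((v : ℝ) * x ^ 2 / 2)
        * ((√(2 * π * v))⁻¹ * rexp (-(s - (v : ℝ) * x) ^ 2 / (2 * v)))
      = (√(2 * π * v))⁻¹ * rexp ((v : ℝ) * x ^ 2 / 2 + -(s - (v : ℝ) * x) ^ 2 / (2 * v)) by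
        rw [Real.exp_add]; ring]
  congr 1
  have : (v : ℝ) ≠ 0 := ne_of_gt hv
  field_simp
  ring

/-- The Gaussian Laplace-transform identity in `ℝ≥0∞` form. -/
lemma gauss_lintegral_exp (v : NNReal) (hvpos : 0 < (v : ℝ)) (hvne : v ≠ 0) (x : ℝ) :
    ∫⁻ s : ℝ, ENNReal.ofReal
        (Real.exp (s * x) * ProbabilityTheory.gaussianPDFReal 0 v s)
      = ENNReal.ofReal (Real.exp ((v : ℝ) * x ^ 2 / 2)) := by
  calc ∫⁻ s : ℝ, ENNReal.ofReal
        (Real.exp (s * x) * ProbabilityTheory.gaussianPDFReal 0 v s)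
      = ∫⁻ s : ℝ, ENNReal.ofReal (Real.exp ((v : ℝ) * x ^ 2 / 2))
          * ENNReal.ofReal (ProbabilityTheory.gaussianPDFReal ((v : ℝ) * x) v s) := by
        refine lintegral_congr fun s => ?_
        rw [gauss_complete_square v hvpos x s,
          ENNReal.ofReal_mul (le_of_lt (Real.exp_pos _))]
    _ = ENNReal.ofReal (Real.exp ((v : ℝ) * x ^ 2 / 2)) := by
        rw [lintegral_const_mul _
          (ProbabilityTheory.measurable_gaussianPDFReal _ _).ennreal_ofReal,
          ProbabilityTheory.lintegral_gaussianPDFReal_eq_one _ hvne, mul_one]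

/-- Lintegral of a nonnegative constant times a Gaussian pdf. -/
lemma gauss_lintegral_const_mul (w : NNReal) (hwne : w ≠ 0) (c : ℝ) (hc : 0 ≤ c) :
    ∫⁻ s : ℝ, ENNReal.ofReal (c * ProbabilityTheory.gaussianPDFReal 0 w s)
      = ENNReal.ofReal c := by
  calc ∫⁻ s : ℝ, ENNReal.ofReal (c * ProbabilityTheory.gaussianPDFReal 0 w s)
      = ∫⁻ s : ℝ, ENNReal.ofReal c
          * ENNReal.ofReal (ProbabilityTheory.gaussianPDFReal 0 w s) := by
        refine lintegral_congr fun s => ?_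
        rw [ENNReal.ofReal_mul hc]
    _ = ENNReal.ofReal c := by
        rw [lintegral_const_mul _
          (ProbabilityTheory.measurable_gaussianPDFReal _ _).ennreal_ofReal,
          ProbabilityTheory.lintegral_gaussianPDFReal_eq_one _ hwne, mul_one]

/-- If `X` is a mean-zero sub-Gaussian random variable with parameter `N`, i.e.
`E[exp(λX)] ≤ exp(λ²N²/2)` for all real `λ`, then for every `λ ∈ [0,1)`,
`E[exp(λX²/(2N²))] ≤ 1/√(1-λ)`. -/
theorem subGaussian_exp_sq_moment
    {Ω : Type*} [MeasurableSpace Ω] (μ : Measure Ω) [IsProbabilityMeasure μ]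
    (X : Ω → ℝ) (hX : Measurable X) (N : ℝ) (hN : 0 < N)
    (hmean : ∫ ω, X ω ∂μ = 0)
    (hsg : ∀ l : ℝ, ∫ ω, Real.exp (l * X ω) ∂μ ≤ Real.exp (l ^ 2 * N ^ 2 / 2)) :
    ∀ l : ℝ, 0 ≤ l → l < 1 →
      ∫ ω, Real.exp (l * (X ω) ^ 2 / (2 * N ^ 2)) ∂μ ≤ 1 / Real.sqrt (1 - l) := by
  intro l hl0 hl1
  have hN2 : (0 : ℝ) < N ^ 2 := by positivity
  have h1l : (0 : ℝ) < 1 - l := by linarith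
  rcases eq_or_lt_of_le hl0 with rfl | hl
  · simp
  -- l > 0 now
  have hRpos : (0 : ℝ) < 1 / Real.sqrt (1 - l) := by positivity
  set F : Ω → ℝ := fun ω => Real.exp (l * (X ω) ^ 2 / (2 * N ^ 2)) with hF
  by_cases hFi : Integrable F μ
  swap
  · rw [integral_undef hFi]; exact le_of_lt hRpos
  -- the Gaussian variance
  obtain ⟨v, hv⟩ : ∃ v : NNReal, (v : ℝ) = l / N ^ 2 :=
    ⟨⟨l / N ^ 2, le_of_lt (by positivity)⟩, rfl⟩
  have hvpos : 0 < (v : ℝ) := by rw [hv]; positivity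
  have hvne : v ≠ 0 := by
    intro h; rw [h] at hvpos; simp at hvpos
  obtain ⟨w, hw⟩ : ∃ w : NNReal, (w : ℝ) = l / (N ^ 2 * (1 - l)) :=
    ⟨⟨l / (N ^ 2 * (1 - l)), le_of_lt (by positivity)⟩, rfl⟩
  have hwpos : 0 < (w : ℝ) := by rw [hw]; positivity
  have hwne : w ≠ 0 := by
    intro h; rw [h] at hwpos; simp at hwpos
  -- integrability of exp(s * X) for each s
  have hexp_int : ∀ s : ℝ, Integrable (fun ω => Real.exp (s * X ω)) μ := by
    intro s
    refine Integrable.mono (hFi.const_mul (Real.exp (s ^ 2 * N ^ 2 / (2 * l))))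
      ((measurable_const.mul hX).exp.aestronglyMeasurable) (ae_of_all _ fun ω => ?_)
    rw [Real.norm_eq_abs, Real.norm_eq_abs, abs_of_nonneg (Real.exp_nonneg _),
      abs_of_nonneg (by positivity), hF]
    rw [← Real.exp_add]
    apply Real.exp_le_exp.2
    rw [div_add_div _ _ (by positivity : (2 : ℝ) * l ≠ 0) (by positivity : (2 : ℝ) * N ^ 2 ≠ 0)]
    rw [le_div_iff₀ (by positivity)]
    nlinarith [sq_nonneg (s * N ^ 2 - l * X ω), sq_nonneg (X ω), sq_nonneg s]
  -- key pointwise identity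
  have hkey : ∀ ω : Ω, ENNReal.ofReal (F ω)
      = ∫⁻ s : ℝ, ENNReal.ofReal
          (Real.exp (s * X ω) * ProbabilityTheory.gaussianPDFReal 0 v s) := by
    intro ω
    rw [gauss_lintegral_exp v hvpos hvne (X ω)]
    have harg : l * X ω ^ 2 / (2 * N ^ 2) = (v : ℝ) * X ω ^ 2 / 2 := by
      rw [hv]; field_simp
    rw [hF]
    simp only
    rw [harg]
  -- measurability for Tonelli
  have hmeas : AEMeasurable (Function.uncurry fun (ω : Ω) (s : ℝ) =>
      ENNReal.ofReal (Real.exp (s * X ω) * ProbabilityTheory.gaussianPDFReal 0 v s))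
      (μ.prod volume) := by
    apply Measurable.aemeasurable
    apply Measurable.ennreal_ofReal
    exact ((measurable_snd.mul (hX.comp measurable_fst)).exp.mul
      ((ProbabilityTheory.measurable_gaussianPDFReal 0 v).comp measurable_snd))
  have step1 : ENNReal.ofReal (∫ ω, F ω ∂μ)
      = ∫⁻ s : ℝ, ∫⁻ ω, ENNReal.ofReal
          (Real.exp (s * X ω) * ProbabilityTheory.gaussianPDFReal 0 v s) ∂μ := by
    rw [ofReal_integral_eq_lintegral_ofReal hFi
      (ae_of_all _ fun ω => le_of_lt (Real.exp_pos _))]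
    rw [lintegral_congr hkey]
    exact lintegral_lintegral_swap hmeas
  have step2 : ∀ s : ℝ, ∫⁻ ω, ENNReal.ofReal
        (Real.exp (s * X ω) * ProbabilityTheory.gaussianPDFReal 0 v s) ∂μ
      ≤ ENNReal.ofReal (Real.exp (s ^ 2 * N ^ 2 / 2)
          * ProbabilityTheory.gaussianPDFReal 0 v s) := by
    intro s
    have hpdf : 0 ≤ ProbabilityTheory.gaussianPDFReal 0 v s :=
      ProbabilityTheory.gaussianPDFReal_nonneg 0 v s
    calc ∫⁻ ω, ENNReal.ofReal
          (Real.exp (s * X ω) * ProbabilityTheory.gaussianPDFReal 0 v s) ∂μ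
        = ∫⁻ ω, ENNReal.ofReal (Real.exp (s * X ω))
            * ENNReal.ofReal (ProbabilityTheory.gaussianPDFReal 0 v s) ∂μ := by
          refine lintegral_congr fun ω => ?_
          rw [ENNReal.ofReal_mul (le_of_lt (Real.exp_pos _))]
      _ = (∫⁻ ω, ENNReal.ofReal (Real.exp (s * X ω)) ∂μ)
            * ENNReal.ofReal (ProbabilityTheory.gaussianPDFReal 0 v s) :=
          lintegral_mul_const' _ _ ENNReal.ofReal_ne_top
      _ ≤ ENNReal.ofReal (Real.exp (s ^ 2 * N ^ 2 / 2))
            * ENNReal.ofReal (ProbabilityTheory.gaussianPDFReal 0 v s) := by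
          refine mul_le_mul_left ?_ _
          rw [← ofReal_integral_eq_lintegral_ofReal (hexp_int s)
            (ae_of_all _ fun ω => le_of_lt (Real.exp_pos _))]
          exact ENNReal.ofReal_le_ofReal (hsg s)
      _ = ENNReal.ofReal (Real.exp (s ^ 2 * N ^ 2 / 2)
            * ProbabilityTheory.gaussianPDFReal 0 v s) := by
          rw [ENNReal.ofReal_mul (le_of_lt (Real.exp_pos _))]
  -- pointwise identity for the final Gaussian integral
  have hsq : ∀ s : ℝ, Real.exp (s ^ 2 * N ^ 2 / 2) * ProbabilityTheory.gaussianPDFReal 0 v s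
      = (1 / Real.sqrt (1 - l)) * ProbabilityTheory.gaussianPDFReal 0 w s := by
    intro s
    simp only [ProbabilityTheory.gaussianPDFReal, sub_zero]
    rw [show rexp (s ^ 2 * N ^ 2 / 2) * ((√(2 * π * v))⁻¹ * rexp (-s ^ 2 / (2 * v)))
        = (√(2 * π * v))⁻¹ * rexp (s ^ 2 * N ^ 2 / 2 + -s ^ 2 / (2 * v)) by
          rw [Real.exp_add]; ring]
    have hcoef : (√(2 * π * (v : ℝ)))⁻¹
        = (1 / Real.sqrt (1 - l)) * (√(2 * π * (w : ℝ)))⁻¹ := by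
      have h2 : 2 * π * (w : ℝ) = (2 * π * (v : ℝ)) / (1 - l) := by
        rw [hv, hw]; field_simp
      rw [h2, Real.sqrt_div' _ (le_of_lt h1l)]
      have h3 : Real.sqrt (2 * π * (v : ℝ)) ≠ 0 := by
        refine ne_of_gt (Real.sqrt_pos.2 ?_)
        have := pi_pos
        positivity
      have h4 : Real.sqrt (1 - l) ≠ 0 := ne_of_gt (Real.sqrt_pos.2 h1l)
      field_simp
    have hexpeq : s ^ 2 * N ^ 2 / 2 + -s ^ 2 / (2 * (v : ℝ)) = -s ^ 2 / (2 * (w : ℝ)) := by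
      rw [hv, hw]
      have hNne : N ^ 2 ≠ 0 := ne_of_gt hN2
      have hlne : l ≠ 0 := ne_of_gt hl
      have h1lne : (1 : ℝ) - l ≠ 0 := ne_of_gt h1l
      field_simp
      ring
    rw [hexpeq, hcoef]
    ring
  have step3 : ∫⁻ s : ℝ, ENNReal.ofReal (Real.exp (s ^ 2 * N ^ 2 / 2)
        * ProbabilityTheory.gaussianPDFReal 0 v s)
      = ENNReal.ofReal (1 / Real.sqrt (1 - l)) := by
    rw [lintegral_congr fun s => by rw [hsq s]]
    exact gauss_lintegral_const_mul w hwne _ (le_of_lt hRpos)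
  have final : ENNReal.ofReal (∫ ω, F ω ∂μ) ≤ ENNReal.ofReal (1 / Real.sqrt (1 - l)) := by
    rw [step1, ← step3]
    exact lintegral_mono step2
  exact (ENNReal.ofReal_le_ofReal_iff (le_of_lt hRpos)).1 final
end

section
/- The square root of the Jensen–Shannon divergence satisfies the triangle inequality: √JS(P‖Q) ≤ √JS(P‖R) + √JS(R‖Q) for any probability measures P, Q, R on a common measurable space. -/
open MeasureTheory

/-- Kullback–Leibler divergence `KL(μ‖ν) = ∫ log(dμ/dν) dμ`. -/
noncomputable def klDiv {α : Type*} [MeasurableSpace α] (μ ν : Measure α) : ℝ :=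
  ∫ x, llr μ ν x ∂μ

/-- Jensen–Shannon divergence `JS(P‖Q) = KL(P‖(P+Q)/2) + KL(Q‖(P+Q)/2)`. -/
noncomputable def jsDiv {α : Type*} [MeasurableSpace α] (P Q : Measure α) : ℝ :=
  klDiv P ((2 : ENNReal)⁻¹ • (P + Q)) + klDiv Q ((2 : ENNReal)⁻¹ • (P + Q))

namespace JSAux
open Real Set Filter Topology


/-- scalar triangular-discrimination quantity -/
noncomputable def tdisc (u v : ℝ) : ℝ := (u - v) ^ 2 / (u + v)

lemma tdisc_nonneg {u v : ℝ} (hu : 0 ≤ u) (hv : 0 ≤ v) : 0 ≤ tdisc u v := by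
  unfold tdisc; positivity

lemma sqrt_tdisc_triangle {u v w : ℝ} (hu : 0 ≤ u) (hv : 0 ≤ v) (hw : 0 ≤ w) :
    Real.sqrt (tdisc u v) ≤ Real.sqrt (tdisc u w) + Real.sqrt (tdisc w v) := by
  rcases eq_or_lt_of_le (by linarith : (0:ℝ) ≤ u + v) with hA | hA
  · -- u = v = 0
    have hu0 : u = 0 := by linarith
    have hv0 : v = 0 := by linarith
    have h0 : tdisc 0 0 = 0 := by simp [tdisc]
    rw [hu0, hv0, h0, Real.sqrt_zero]
    positivity
  rcases eq_or_lt_of_le (by linarith : (0:ℝ) ≤ u + w) with hB | hB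
  · have hu0 : u = 0 := by linarith
    have hw0 : w = 0 := by linarith
    simp [tdisc, hu0, hw0]
  rcases eq_or_lt_of_le (by linarith : (0:ℝ) ≤ w + v) with hC | hC
  · have hw0 : w = 0 := by linarith
    have hv0 : v = 0 := by linarith
    simp [tdisc, hw0, hv0]
  set X := tdisc u v with hX
  set Y := tdisc u w with hY
  set Z := tdisc w v with hZ
  have hY0 : 0 ≤ Y := tdisc_nonneg hu hw
  have hZ0 : 0 ≤ Z := tdisc_nonneg hw hv
  -- the cleared polynomial inequality
  have key : ((u-v)^2*((u+w)*(w+v)) - (u-w)^2*((u+v)*(w+v)) - (w-v)^2*((u+v)*(u+w)))^2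
      ≤ 4*((u-w)^2*(w-v)^2*((u+v)^2*((u+w)*(w+v)))) := by
    have hid : 4*((u-w)^2*(w-v)^2*((u+v)^2*((u+w)*(w+v))))
        - ((u-v)^2*((u+w)*(w+v)) - (u-w)^2*((u+v)*(w+v)) - (w-v)^2*((u+v)*(u+w)))^2
        = 4*(u-v)^2*(u-w)^2*(w-v)^2*(u*v+u*w+w*v) := by ring
    nlinarith [mul_nonneg (mul_nonneg (mul_nonneg (sq_nonneg (u-v)) (sq_nonneg (u-w)))
      (sq_nonneg (w-v))) (by positivity : (0:ℝ) ≤ u*v+u*w+w*v)]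
  -- deduce (X - Y - Z)^2 ≤ 4*(Y*Z)
  have key2 : (X - Y - Z)^2 ≤ 4*(Y*Z) := by
    have hXYZ : X - Y - Z = ((u-v)^2*((u+w)*(w+v)) - (u-w)^2*((u+v)*(w+v))
        - (w-v)^2*((u+v)*(u+w))) / ((u+v)*((u+w)*(w+v))) := by
      rw [hX, hY, hZ]; unfold tdisc; field_simp
    have hYZ : Y*Z = ((u-w)^2*(w-v)^2)/((u+w)*(w+v)) := by
      rw [hY, hZ]; unfold tdisc; field_simp
    rw [hXYZ, hYZ, div_pow, ← mul_div_assoc, div_le_div_iff₀ (by positivity) (by positivity)]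
    calc ((u-v)^2*((u+w)*(w+v)) - (u-w)^2*((u+v)*(w+v)) - (w-v)^2*((u+v)*(u+w)))^2
          * ((u+w)*(w+v))
        ≤ (4*((u-w)^2*(w-v)^2*((u+v)^2*((u+w)*(w+v))))) * ((u+w)*(w+v)) := by
          exact mul_le_mul_of_nonneg_right key (by positivity)
      _ = 4*((u-w)^2*(w-v)^2) * ((u+v)*((u+w)*(w+v)))^2 := by ring
  -- conclude
  have h1 : X - Y - Z ≤ 2*(Real.sqrt Y * Real.sqrt Z) := by
    have h2 : X - Y - Z ≤ |X - Y - Z| := le_abs_self _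
    have h3 : |X - Y - Z| = Real.sqrt ((X-Y-Z)^2) := (Real.sqrt_sq_eq_abs _).symm
    have h4 : Real.sqrt ((X-Y-Z)^2) ≤ Real.sqrt (4*(Y*Z)) := Real.sqrt_le_sqrt key2
    have h5 : Real.sqrt (4*(Y*Z)) = 2*(Real.sqrt Y * Real.sqrt Z) := by
      rw [show (4:ℝ)*(Y*Z) = 2^2*(Y*Z) by norm_num, Real.sqrt_mul (by positivity),
        Real.sqrt_sq (by norm_num), Real.sqrt_mul hY0]
    linarith
  have h6 : X ≤ (Real.sqrt Y + Real.sqrt Z)^2 := by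
    have : (Real.sqrt Y + Real.sqrt Z)^2 = Y + Z + 2*(Real.sqrt Y * Real.sqrt Z) := by
      rw [add_sq, Real.sq_sqrt hY0, Real.sq_sqrt hZ0]; ring
    linarith
  calc Real.sqrt X ≤ Real.sqrt ((Real.sqrt Y + Real.sqrt Z)^2) := Real.sqrt_le_sqrt h6
    _ = Real.sqrt Y + Real.sqrt Z := Real.sqrt_sq (by positivity)




/-- Minkowski-type lemma: if `√f ≤ √g + √h` pointwise a.e. with f,g,h nonneg integrable,
then `√∫f ≤ √∫g + √∫h`. -/
lemma sqrt_integral_triangle {α : Type*} [MeasurableSpace α] {μ : Measure α} {f g h : α → ℝ}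
    (hfi : Integrable f μ) (hgi : Integrable g μ) (hhi : Integrable h μ)
    (hf0 : 0 ≤ᵐ[μ] f) (hg0 : 0 ≤ᵐ[μ] g) (hh0 : 0 ≤ᵐ[μ] h)
    (tri : ∀ᵐ x ∂μ, Real.sqrt (f x) ≤ Real.sqrt (g x) + Real.sqrt (h x)) :
    Real.sqrt (∫ x, f x ∂μ) ≤ Real.sqrt (∫ x, g x ∂μ) + Real.sqrt (∫ x, h x ∂μ) := by
  set B := ∫ x, g x ∂μ with hB
  set C := ∫ x, h x ∂μ with hC
  have hB0 : 0 ≤ B := integral_nonneg_of_ae hg0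
  have hC0 : 0 ≤ C := integral_nonneg_of_ae hh0
  -- measurability of sqrt g, sqrt h
  have hsg : AEStronglyMeasurable (fun x => Real.sqrt (g x)) μ :=
    Real.continuous_sqrt.comp_aestronglyMeasurable hgi.aestronglyMeasurable
  have hsh : AEStronglyMeasurable (fun x => Real.sqrt (h x)) μ :=
    Real.continuous_sqrt.comp_aestronglyMeasurable hhi.aestronglyMeasurable
  -- integrability of √g * √h
  have hgh : Integrable (fun x => Real.sqrt (g x) * Real.sqrt (h x)) μ := by
    refine Integrable.mono' ((hgi.add hhi).div_const 2) (hsg.mul hsh) ?_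
    filter_upwards [hg0, hh0] with x hgx hhx
    simp only [Pi.add_apply]
    rw [Real.norm_of_nonneg (by positivity)]
    nlinarith [sq_nonneg (Real.sqrt (g x) - Real.sqrt (h x)), Real.sq_sqrt hgx,
      Real.sq_sqrt hhx, Real.sqrt_nonneg (g x), Real.sqrt_nonneg (h x)]
  -- Cauchy-Schwarz : ∫ √g √h ≤ √B √C
  have cs : ∫ x, Real.sqrt (g x) * Real.sqrt (h x) ∂μ ≤ Real.sqrt B * Real.sqrt C := by
    have hconj : Real.HolderConjugate 2 2 := Real.HolderConjugate.two_two
    have hmg : MemLp (fun x => Real.sqrt (g x)) (ENNReal.ofReal 2) μ := by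
      rw [show ENNReal.ofReal 2 = 2 by norm_num]
      rw [memLp_two_iff_integrable_sq hsg]
      refine hgi.congr ?_
      filter_upwards [hg0] with x hgx
      rw [Real.sq_sqrt hgx]
    have hmh : MemLp (fun x => Real.sqrt (h x)) (ENNReal.ofReal 2) μ := by
      rw [show ENNReal.ofReal 2 = 2 by norm_num]
      rw [memLp_two_iff_integrable_sq hsh]
      refine hhi.congr ?_
      filter_upwards [hh0] with x hhx
      rw [Real.sq_sqrt hhx]
    have := integral_mul_le_Lp_mul_Lq_of_nonneg hconj
      (Filter.Eventually.of_forall fun x => Real.sqrt_nonneg (g x))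
      (Filter.Eventually.of_forall fun x => Real.sqrt_nonneg (h x)) hmg hmh
    calc ∫ x, Real.sqrt (g x) * Real.sqrt (h x) ∂μ
        ≤ (∫ x, Real.sqrt (g x) ^ (2:ℝ) ∂μ) ^ (1/(2:ℝ)) * (∫ x, Real.sqrt (h x) ^ (2:ℝ) ∂μ) ^ (1/(2:ℝ)) := this
      _ = Real.sqrt B * Real.sqrt C := by
          have e1 : ∫ x, Real.sqrt (g x) ^ (2:ℝ) ∂μ = B := by
            rw [hB]; refine integral_congr_ae ?_
            filter_upwards [hg0] with x hgx
            rw [Real.rpow_two, Real.sq_sqrt hgx]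
          have e2 : ∫ x, Real.sqrt (h x) ^ (2:ℝ) ∂μ = C := by
            rw [hC]; refine integral_congr_ae ?_
            filter_upwards [hh0] with x hhx
            rw [Real.rpow_two, Real.sq_sqrt hhx]
          rw [e1, e2, Real.sqrt_eq_rpow, Real.sqrt_eq_rpow]
  -- main estimate : ∫ f ≤ (√B + √C)^2
  have main : ∫ x, f x ∂μ ≤ (Real.sqrt B + Real.sqrt C)^2 := by
    have step : ∫ x, f x ∂μ ≤ ∫ x, (g x + h x + 2*(Real.sqrt (g x) * Real.sqrt (h x))) ∂μ := by
      refine integral_mono_ae hfi ?_ ?_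
      · exact (hgi.add hhi).add (hgh.const_mul 2)
      · filter_upwards [tri, hf0, hg0, hh0] with x htri hfx hgx hhx
        nlinarith [Real.sq_sqrt hfx, Real.sq_sqrt hgx, Real.sq_sqrt hhx,
          Real.sqrt_nonneg (f x), Real.sqrt_nonneg (g x), Real.sqrt_nonneg (h x)]
    have expand : ∫ x, (g x + h x + 2*(Real.sqrt (g x) * Real.sqrt (h x))) ∂μ
        = B + C + 2 * ∫ x, Real.sqrt (g x) * Real.sqrt (h x) ∂μ := by
      have I1 : Integrable (fun x => g x + h x) μ := hgi.add hhi
      rw [integral_add I1 (hgh.const_mul 2), integral_add hgi hhi, integral_const_mul]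
    have sq_expand : (Real.sqrt B + Real.sqrt C)^2 = B + C + 2*(Real.sqrt B * Real.sqrt C) := by
      rw [add_sq, Real.sq_sqrt hB0, Real.sq_sqrt hC0]; ring
    rw [sq_expand]
    rw [expand] at step
    linarith
  calc Real.sqrt (∫ x, f x ∂μ) ≤ Real.sqrt ((Real.sqrt B + Real.sqrt C)^2) :=
        Real.sqrt_le_sqrt main
    _ = Real.sqrt B + Real.sqrt C := Real.sqrt_sq (by positivity)









/-- pointwise Jensen-Shannon summand -/
noncomputable def Fd (a b : ℝ) : ℝ :=
  a * (Real.log a - Real.log ((a + b) / 2)) + b * (Real.log b - Real.log ((a + b) / 2))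

/-- integrand of the integral representation of `Fd` -/
noncomputable def itg (a b s : ℝ) : ℝ := s * (a - b) ^ 2 / (2 * (a + s) * (b + s) * ((a + b) / 2 + s))

lemma itg_nonneg {a b s : ℝ} (ha : 0 ≤ a) (hb : 0 ≤ b) (hs : 0 ≤ s) : 0 ≤ itg a b s := by
  unfold itg; positivity

lemma itg_eq {a b s : ℝ} (ha : 0 ≤ a) (hb : 0 ≤ b) (hs : 0 < s) :
    itg a b s = s * tdisc (1 / (a + s)) (1 / (b + s)) := by
  unfold itg tdisc
  have h1 : a + s ≠ 0 := by positivity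
  have h2 : b + s ≠ 0 := by positivity
  have h3 : (a + b) / 2 + s ≠ 0 := by positivity
  have h4 : a + b + 2 * s ≠ 0 := by positivity
  field_simp
  ring

lemma sqrt_itg_triangle {a b c s : ℝ} (ha : 0 ≤ a) (hb : 0 ≤ b) (hc : 0 ≤ c) (hs : 0 < s) :
    Real.sqrt (itg a b s) ≤ Real.sqrt (itg a c s) + Real.sqrt (itg c b s) := by
  rw [itg_eq ha hb hs, itg_eq ha hc hs, itg_eq hc hb hs,
    Real.sqrt_mul hs.le, Real.sqrt_mul hs.le, Real.sqrt_mul hs.le, ← mul_add]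
  exact mul_le_mul_of_nonneg_left
    (sqrt_tdisc_triangle (by positivity) (by positivity) (by positivity))
    (Real.sqrt_nonneg s)

/-- the antiderivative -/
noncomputable def Gant (a b s : ℝ) : ℝ :=
  (a + b) * Real.log ((a + b) / 2 + s) - a * Real.log (a + s) - b * Real.log (b + s)

lemma hasDerivAt_Gant {a b s : ℝ} (ha : 0 ≤ a) (hb : 0 ≤ b) (hs : 0 < s) :
    HasDerivAt (Gant a b) (itg a b s) s := by
  have h1 : (0:ℝ) < a + s := by positivity
  have h2 : (0:ℝ) < b + s := by positivity
  have h3 : (0:ℝ) < (a + b) / 2 + s := by positivity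
  have d3 : HasDerivAt (fun s => Real.log ((a + b) / 2 + s)) (1 / ((a + b) / 2 + s)) s := by
    simpa using (((hasDerivAt_id s).const_add ((a + b) / 2)).log h3.ne')
  have d1 : HasDerivAt (fun s => Real.log (a + s)) (1 / (a + s)) s := by
    simpa using (((hasDerivAt_id s).const_add a).log h1.ne')
  have d2 : HasDerivAt (fun s => Real.log (b + s)) (1 / (b + s)) s := by
    simpa using (((hasDerivAt_id s).const_add b).log h2.ne')
  have := ((d3.const_mul (a + b)).sub (d1.const_mul a)).sub (d2.const_mul b)
  refine this.congr_deriv ?_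
  unfold itg
  field_simp
  ring

lemma contWithin_term {c d : ℝ} (h : c ≠ 0 → 0 < d) :
    ContinuousWithinAt (fun s : ℝ => c * Real.log (d + s)) (Ici 0) 0 := by
  by_cases hc : c = 0
  · subst hc
    exact (continuousWithinAt_const (b := (0:ℝ))).congr (fun y _ => by simp) (by simp)
  · have hd := h hc
    have : ContinuousAt (fun s : ℝ => c * Real.log (d + s)) 0 := by
      have hlog : ContinuousAt Real.log (d + 0) := Real.continuousAt_log (by linarith)
      exact (hlog.comp ((continuous_const.add continuous_id).continuousAt)).const_mul c
    exact this.continuousWithinAt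

lemma tendsto_term (c d : ℝ) (hd : 0 ≤ d) :
    Tendsto (fun s : ℝ => c * (Real.log (d + s) - Real.log s)) atTop (𝓝 0) := by
  have h1 : Tendsto (fun s : ℝ => d / s + 1) atTop (𝓝 1) := by
    have := Tendsto.div_atTop (tendsto_const_nhds (x := d)) tendsto_id
    simpa using this.add tendsto_const_nhds (b := (1:ℝ))
  have h2 : Tendsto (fun s : ℝ => Real.log (d / s + 1)) atTop (𝓝 0) := by
    have := (Real.continuousAt_log one_ne_zero).tendsto.comp h1
    simpa [Function.comp_def] using this
  have h3 : Tendsto (fun s : ℝ => c * Real.log (d / s + 1)) atTop (𝓝 0) := by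
    simpa using h2.const_mul c
  refine h3.congr' ?_
  filter_upwards [eventually_gt_atTop (0:ℝ)] with s hs
  rw [← Real.log_div (by positivity) hs.ne']
  congr 2
  field_simp

lemma tendsto_Gant (a b : ℝ) (ha : 0 ≤ a) (hb : 0 ≤ b) :
    Tendsto (Gant a b) atTop (𝓝 0) := by
  have h := ((tendsto_term (a+b) ((a+b)/2) (by linarith)).sub
      (tendsto_term a a ha)).sub (tendsto_term b b hb)
  rw [show (0:ℝ) - 0 - 0 = 0 by ring] at h
  refine h.congr' ?_
  filter_upwards [eventually_gt_atTop (0:ℝ)] with s hs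
  unfold Gant
  ring

lemma contWithin_Gant (a b : ℝ) (ha : 0 ≤ a) (hb : 0 ≤ b) :
    ContinuousWithinAt (Gant a b) (Ici 0) 0 := by
  unfold Gant
  refine ContinuousWithinAt.sub (ContinuousWithinAt.sub ?_ ?_) ?_
  · refine contWithin_term (fun h => ?_)
    have : 0 < a + b := lt_of_le_of_ne (by linarith) (Ne.symm h)
    linarith
  · exact contWithin_term (fun h => lt_of_le_of_ne ha (Ne.symm h))
  · exact contWithin_term (fun h => lt_of_le_of_ne hb (Ne.symm h))

lemma Gant_zero (a b : ℝ) : Gant a b 0 = - Fd a b := by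
  unfold Gant Fd
  simp only [add_zero]
  ring

lemma integral_itg {a b : ℝ} (ha : 0 ≤ a) (hb : 0 ≤ b) :
    ∫ s in Ioi (0:ℝ), itg a b s = Fd a b := by
  rw [show Fd a b = 0 - Gant a b 0 by rw [Gant_zero]; ring]
  exact integral_Ioi_of_hasDerivAt_of_nonneg (contWithin_Gant a b ha hb)
    (fun s hs => hasDerivAt_Gant ha hb hs)
    (fun s hs => itg_nonneg ha hb (le_of_lt hs)) (tendsto_Gant a b ha hb)

lemma integrableOn_itg {a b : ℝ} (ha : 0 ≤ a) (hb : 0 ≤ b) :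
    IntegrableOn (itg a b) (Ioi (0:ℝ)) := by
  exact integrableOn_Ioi_deriv_of_nonneg (contWithin_Gant a b ha hb)
    (fun s hs => hasDerivAt_Gant ha hb hs)
    (fun s hs => itg_nonneg ha hb (le_of_lt hs)) (tendsto_Gant a b ha hb)

lemma Fd_nonneg {a b : ℝ} (ha : 0 ≤ a) (hb : 0 ≤ b) : 0 ≤ Fd a b := by
  rw [← integral_itg ha hb]
  exact setIntegral_nonneg measurableSet_Ioi (fun s hs => itg_nonneg ha hb (le_of_lt hs))

lemma sqrt_Fd_triangle {a b c : ℝ} (ha : 0 ≤ a) (hb : 0 ≤ b) (hc : 0 ≤ c) :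
    Real.sqrt (Fd a b) ≤ Real.sqrt (Fd a c) + Real.sqrt (Fd c b) := by
  rw [← integral_itg ha hb, ← integral_itg ha hc, ← integral_itg hc hb]
  refine sqrt_integral_triangle (integrableOn_itg ha hb) (integrableOn_itg ha hc)
    (integrableOn_itg hc hb) ?_ ?_ ?_ ?_
  · filter_upwards [ae_restrict_mem measurableSet_Ioi] with s hs
    exact itg_nonneg ha hb (le_of_lt hs)
  · filter_upwards [ae_restrict_mem measurableSet_Ioi] with s hs
    exact itg_nonneg ha hc (le_of_lt hs)
  · filter_upwards [ae_restrict_mem measurableSet_Ioi] with s hs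
    exact itg_nonneg hc hb (le_of_lt hs)
  · filter_upwards [ae_restrict_mem measurableSet_Ioi] with s hs
    exact sqrt_itg_triangle ha hb hc hs











noncomputable def Fh (a b : ℝ) : ℝ := a * (Real.log a - Real.log ((a + b) / 2))

lemma Fd_eq (a b : ℝ) : Fd a b = Fh a b + Fh b a := by
  unfold Fd Fh; rw [add_comm b a]

lemma abs_Fh_le {a b : ℝ} (ha : 0 ≤ a) (hb : 0 ≤ b) : |Fh a b| ≤ a + b := by
  unfold Fh
  rcases eq_or_lt_of_le ha with h0 | hapos
  · rw [← h0]; simp; positivity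
  · have hm : 0 < (a + b) / 2 := by linarith
    have key : Real.log a - Real.log ((a + b) / 2) = Real.log (a / ((a + b) / 2)) := by
      rw [Real.log_div hapos.ne' hm.ne']
    rw [key, abs_le]
    constructor
    · have h1 : Real.log (((a + b) / 2) / a) ≤ ((a + b) / 2) / a - 1 :=
        Real.log_le_sub_one_of_pos (by positivity)
      have h2 : Real.log (a / ((a + b) / 2)) = - Real.log (((a + b) / 2) / a) := by
        rw [← Real.log_inv]; congr 1; field_simp
      have h3 : a - (a + b) / 2 ≤ a * Real.log (a / ((a + b) / 2)) := by
        rw [h2]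
        have h4 := mul_le_mul_of_nonneg_left h1 ha
        have e : a * (((a + b) / 2) / a - 1) = (a + b) / 2 - a := by field_simp
        nlinarith
      linarith
    · have h1 : Real.log (a / ((a + b) / 2)) ≤ a / ((a + b) / 2) - 1 :=
        Real.log_le_sub_one_of_pos (by positivity)
      have h2 : a / ((a + b) / 2) ≤ 2 := by
        rw [div_le_iff₀ hm]; linarith
      nlinarith

variable {α : Type*} [MeasurableSpace α]

lemma kl_half_eq (P Q μ : Measure α) [IsFiniteMeasure P] [IsFiniteMeasure Q] [SigmaFinite μ]
    (hP : P ≪ μ) (hQ : Q ≪ μ) :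
    klDiv P ((2 : ENNReal)⁻¹ • (P + Q))
      = ∫ x, Fh (P.rnDeriv μ x).toReal (Q.rnDeriv μ x).toReal ∂μ := by
  set M : Measure α := (2 : ENNReal)⁻¹ • (P + Q) with hMdef
  have h2ne : (2 : ENNReal)⁻¹ ≠ 0 := by simp
  have h2top : (2 : ENNReal)⁻¹ ≠ ⊤ := by simp
  have hPM : P ≪ M :=
    (Measure.absolutelyContinuous_of_le (Measure.le_add_right le_rfl)).trans
      (Measure.absolutelyContinuous_smul h2ne)
  haveI hMfin : IsFiniteMeasure M := by
    constructor
    rw [hMdef, Measure.smul_apply, smul_eq_mul]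
    exact ENNReal.mul_lt_top (by simp) (measure_lt_top _ _)
  have hMμ : M ≪ μ := Measure.smul_absolutelyContinuous.trans (hP.add_left hQ)
  have hstep : klDiv P M = ∫ x, (P.rnDeriv μ x).toReal • llr P M x ∂μ :=
    (integral_rnDeriv_smul hP).symm
  rw [hstep]
  refine integral_congr_ae ?_
  -- a.e. facts
  have hmul : P.rnDeriv M * M.rnDeriv μ =ᵐ[μ] P.rnDeriv μ :=
    Measure.rnDeriv_mul_rnDeriv hPM
  have hMd : M.rnDeriv μ =ᵐ[μ] fun x => (2 : ENNReal)⁻¹ * (P.rnDeriv μ x + Q.rnDeriv μ x) := by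
    have h1 : M.rnDeriv μ =ᵐ[μ] (2 : ENNReal)⁻¹ • (P + Q).rnDeriv μ :=
      Measure.rnDeriv_smul_left_of_ne_top (P + Q) μ h2top
    have h2 : (P + Q).rnDeriv μ =ᵐ[μ] P.rnDeriv μ + Q.rnDeriv μ :=
      Measure.rnDeriv_add P Q μ
    filter_upwards [h1, h2] with x hx1 hx2
    rw [hx1]
    simp only [Pi.smul_apply, smul_eq_mul, hx2, Pi.add_apply]
  have hPfin : ∀ᵐ x ∂μ, P.rnDeriv μ x < ⊤ := Measure.rnDeriv_lt_top P μ
  have hQfin : ∀ᵐ x ∂μ, Q.rnDeriv μ x < ⊤ := Measure.rnDeriv_lt_top Q μ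
  filter_upwards [hmul, hMd, hPfin, hQfin] with x hmulx hMdx hPfx hQfx
  simp only [Pi.mul_apply] at hmulx
  set pE := P.rnDeriv μ x
  set qE := Q.rnDeriv μ x
  rcases eq_or_ne pE 0 with hp0 | hp0
  · -- both sides zero
    rw [hp0]
    simp [Fh]
  · have hppos : 0 < pE := lt_of_le_of_ne zero_le (Ne.symm hp0)
    have hmE : M.rnDeriv μ x = (2 : ENNReal)⁻¹ * (pE + qE) := hMdx
    have hmpos : 0 < (2 : ENNReal)⁻¹ * (pE + qE) := by
      apply ENNReal.mul_pos h2ne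
      exact (lt_of_lt_of_le hppos (le_add_right le_rfl)).ne'
    have hmfin : (2 : ENNReal)⁻¹ * (pE + qE) < ⊤ := by
      apply ENNReal.mul_lt_top (by simp)
      exact ENNReal.add_lt_top.mpr ⟨hPfx, hQfx⟩
    -- P.rnDeriv M x = pE / mE
    have hr : P.rnDeriv M x = pE / ((2 : ENNReal)⁻¹ * (pE + qE)) := by
      rw [ENNReal.eq_div_iff hmpos.ne' hmfin.ne]
      rw [mul_comm, ← hmE]
      exact hmulx
    have htoReal : (P.rnDeriv M x).toReal = pE.toReal / ((pE.toReal + qE.toReal) / 2) := by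
      rw [hr, ENNReal.toReal_div]
      congr 1
      rw [ENNReal.toReal_mul, ENNReal.toReal_add hPfx.ne hQfx.ne]
      simp
      ring
    have hptR : 0 < pE.toReal := ENNReal.toReal_pos hp0 hPfx.ne
    have hqtR : 0 ≤ qE.toReal := ENNReal.toReal_nonneg
    have hmtR : 0 < (pE.toReal + qE.toReal) / 2 := by linarith
    rw [llr, htoReal, Real.log_div hptR.ne' hmtR.ne']
    simp only [smul_eq_mul, Fh]


















lemma integrable_Fh (P Q μ : Measure α) [IsFiniteMeasure P] [IsFiniteMeasure Q]
    [IsFiniteMeasure μ] :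
    Integrable (fun x => Fh (P.rnDeriv μ x).toReal (Q.rnDeriv μ x).toReal) μ := by
  have hp : Measurable (fun x => (P.rnDeriv μ x).toReal) :=
    (Measure.measurable_rnDeriv P μ).ennreal_toReal
  have hq : Measurable (fun x => (Q.rnDeriv μ x).toReal) :=
    (Measure.measurable_rnDeriv Q μ).ennreal_toReal
  have hmeas : Measurable (fun x => Fh (P.rnDeriv μ x).toReal (Q.rnDeriv μ x).toReal) := by
    unfold Fh
    exact hp.mul ((Real.measurable_log.comp hp).sub
      (Real.measurable_log.comp ((hp.add hq).div_const 2)))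
  refine Integrable.mono' ((Measure.integrable_toReal_rnDeriv (μ := P) (ν := μ)).add
    (Measure.integrable_toReal_rnDeriv (μ := Q) (ν := μ))) hmeas.aestronglyMeasurable ?_
  refine Filter.Eventually.of_forall fun x => ?_
  rw [Real.norm_eq_abs]
  exact abs_Fh_le ENNReal.toReal_nonneg ENNReal.toReal_nonneg

lemma js_eq (P Q μ : Measure α) [IsFiniteMeasure P] [IsFiniteMeasure Q] [IsFiniteMeasure μ]
    (hP : P ≪ μ) (hQ : Q ≪ μ) :
    jsDiv P Q = ∫ x, Fd (P.rnDeriv μ x).toReal (Q.rnDeriv μ x).toReal ∂μ := by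
  have h2 : klDiv Q ((2 : ENNReal)⁻¹ • (P + Q))
      = ∫ x, Fh (Q.rnDeriv μ x).toReal (P.rnDeriv μ x).toReal ∂μ := by
    rw [add_comm P Q]
    exact kl_half_eq Q P μ hQ hP
  rw [jsDiv, kl_half_eq P Q μ hP hQ, h2,
    ← integral_add (integrable_Fh P Q μ) (integrable_Fh Q P μ)]
  exact integral_congr_ae (Filter.Eventually.of_forall fun x => (Fd_eq _ _).symm)


end JSAux


open JSAux in
/-- The square root of the Jensen–Shannon divergence satisfies the triangle inequality:
`√JS(P‖Q) ≤ √JS(P‖R) + √JS(R‖Q)` for any probability measures `P, Q, R`. -/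
theorem sqrt_jsDiv_triangle
    {α : Type*} [MeasurableSpace α] (P Q R : Measure α)
    [IsProbabilityMeasure P] [IsProbabilityMeasure Q] [IsProbabilityMeasure R] :
    Real.sqrt (jsDiv P Q) ≤ Real.sqrt (jsDiv P R) + Real.sqrt (jsDiv R Q) := by
  set μ : Measure α := P + Q + R with hμdef
  have hP : P ≪ μ := Measure.absolutelyContinuous_of_le
    (Measure.le_add_right (Measure.le_add_right le_rfl))
  have hQ : Q ≪ μ := Measure.absolutelyContinuous_of_le
    (Measure.le_add_right (Measure.le_add_left le_rfl))
  have hR : R ≪ μ := Measure.absolutelyContinuous_of_le (Measure.le_add_left le_rfl)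
  set p : α → ℝ := fun x => (P.rnDeriv μ x).toReal
  set q : α → ℝ := fun x => (Q.rnDeriv μ x).toReal
  set r : α → ℝ := fun x => (R.rnDeriv μ x).toReal
  have hintPQ : Integrable (fun x => Fd (p x) (q x)) μ :=
    ((integrable_Fh P Q μ).add (integrable_Fh Q P μ)).congr
      (Filter.Eventually.of_forall fun x => (Fd_eq _ _).symm)
  have hintPR : Integrable (fun x => Fd (p x) (r x)) μ :=
    ((integrable_Fh P R μ).add (integrable_Fh R P μ)).congr
      (Filter.Eventually.of_forall fun x => (Fd_eq _ _).symm)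
  have hintRQ : Integrable (fun x => Fd (r x) (q x)) μ :=
    ((integrable_Fh R Q μ).add (integrable_Fh Q R μ)).congr
      (Filter.Eventually.of_forall fun x => (Fd_eq _ _).symm)
  rw [js_eq P Q μ hP hQ, js_eq P R μ hP hR, js_eq R Q μ hR hQ]
  refine sqrt_integral_triangle hintPQ hintPR hintRQ ?_ ?_ ?_ ?_
  · exact Filter.Eventually.of_forall fun x =>
      Fd_nonneg ENNReal.toReal_nonneg ENNReal.toReal_nonneg
  · exact Filter.Eventually.of_forall fun x =>
      Fd_nonneg ENNReal.toReal_nonneg ENNReal.toReal_nonneg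
  · exact Filter.Eventually.of_forall fun x =>
      Fd_nonneg ENNReal.toReal_nonneg ENNReal.toReal_nonneg
  · exact Filter.Eventually.of_forall fun x =>
      sqrt_Fd_triangle ENNReal.toReal_nonneg ENNReal.toReal_nonneg ENNReal.toReal_nonneg
end
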